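/- With the setup above, for 1 ≤ k ≤ n-1: sign(b_k) = +1 if age(k) = 2 and sign(b_k) = -1 if age(k) ∈ {1,3}. Consequently, as a real quadratic form on the hyperplane orthogonal to the all-ones vector, C_S has signature (h^{2,2}, h^{1,1} + h^{3,3}) and rank n-1, provided b_k ≠ 0 for all 1 ≤ k ≤ n-1. -/

import Mathlib

open scoped Classical

noncomputable def age (n : ℕ) (a : Fin 4 → ℤ) (k : ℕ) : ℝ :=
  ∑ μ : Fin 4, Int.fract ((k : ℝ) * (a μ : ℝ) / (n : ℝ))

noncomputable def hpp (n : ℕ) (a : Fin 4 → ℤ) (p : ℕ) : ℕ :=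
  ((Finset.Icc 1 (n - 1)).filter (fun k => age n a k = p)).card

/-- The eigenvalue `b_k = (-1)^{age(k)} · 8 · Π_μ sin(π {k a_μ/n})`;
since `age(k)` is an integer, `(-1)^{age(k)} = cos(π · age(k))`. -/
noncomputable def bR (n : ℕ) (a : Fin 4 → ℤ) (k : ℕ) : ℝ :=
  Real.cos (Real.pi * age n a k) * 8 *
    ∏ μ : Fin 4, Real.sin (Real.pi * Int.fract ((k : ℝ) * (a μ : ℝ) / (n : ℝ)))

/-- The sign of the eigenvalue `b_k` is `+1` for age 2 and `-1` for age 1 or 3;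
consequently the anomaly form `C_S`, restricted to the hyperplane orthogonal to
the all-ones vector (where its eigenvalues are exactly `b_1, …, b_{n-1}`), has
signature `(h^{2,2}, h^{1,1} + h^{3,3})` and rank `n - 1`, provided all these
eigenvalues are nonzero. -/
lemma fract_pos_aux (n : ℕ) (hn : 2 ≤ n) (a : Fin 4 → ℤ)
    (hcop : ∀ μ, Int.gcd (a μ) n = 1) (k : ℕ) (hk : k ∈ Finset.Icc 1 (n - 1))
    (μ : Fin 4) : 0 < Int.fract ((k : ℝ) * (a μ : ℝ) / (n : ℝ)) := by
  rcases Finset.mem_Icc.mp hk with ⟨hk1, hk2⟩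
  have hn0 : (n : ℝ) ≠ 0 := by positivity
  rcases lt_or_eq_of_le (Int.fract_nonneg ((k : ℝ) * (a μ : ℝ) / (n : ℝ))) with h | h
  · exact h
  exfalso
  have h0 : Int.fract ((k : ℝ) * (a μ : ℝ) / (n : ℝ)) = 0 := h.symm
  rw [Int.fract_eq_iff] at h0
  obtain ⟨-, -, z, hz⟩ := h0
  rw [sub_zero] at hz
  have hz' : (k : ℝ) * (a μ : ℝ) = z * n := by
    field_simp at hz; linarith [hz]
  have hz2 : (k : ℤ) * a μ = z * n := by exact_mod_cast hz'
  have hdvd : (n : ℤ) ∣ (k : ℤ) * a μ := ⟨z, by linarith [hz2]⟩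
  have hco : IsCoprime (n : ℤ) (a μ) := by
    rw [Int.isCoprime_iff_gcd_eq_one, Int.gcd_comm]; exact hcop μ
  have hdk : (n : ℤ) ∣ (k : ℤ) := hco.dvd_of_dvd_mul_right hdvd
  have hkpos : (0 : ℤ) < k := by exact_mod_cast hk1
  have := Int.le_of_dvd hkpos hdk
  have hk2' : (k : ℤ) ≤ (n : ℤ) - 1 := by
    have : k ≤ n - 1 := hk2
    omega
  omega

lemma age_mem (n : ℕ) (hn : 2 ≤ n) (a : Fin 4 → ℤ)
    (hcop : ∀ μ, Int.gcd (a μ) n = 1) (hsum : (n : ℤ) ∣ ∑ μ : Fin 4, a μ)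
    (k : ℕ) (hk : k ∈ Finset.Icc 1 (n - 1)) :
    age n a k = 1 ∨ age n a k = 2 ∨ age n a k = 3 := by
  obtain ⟨t, ht⟩ := hsum
  have hn0 : (n : ℝ) ≠ 0 := by positivity
  have hint : age n a k = ((k : ℤ) * t - ∑ μ : Fin 4, ⌊(k : ℝ) * (a μ : ℝ) / (n : ℝ)⌋ : ℤ) := by
    unfold age
    simp only [Int.fract]
    rw [Finset.sum_sub_distrib]
    have h1 : ∑ μ : Fin 4, (k : ℝ) * (a μ : ℝ) / (n : ℝ) = (k : ℝ) * t := by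
      rw [← Finset.sum_div, ← Finset.mul_sum]
      have : ∑ μ : Fin 4, (a μ : ℝ) = (n : ℝ) * t := by
        exact_mod_cast ht
      rw [this]
      field_simp
    rw [h1]
    push_cast
    ring
  have hpos : 0 < age n a k := by
    unfold age
    apply Finset.sum_pos (fun μ _ => fract_pos_aux n hn a hcop k hk μ) Finset.univ_nonempty
  have hlt : age n a k < 4 := by
    unfold age
    calc ∑ μ : Fin 4, Int.fract ((k : ℝ) * (a μ : ℝ) / (n : ℝ))
        < ∑ _μ : Fin 4, (1 : ℝ) :=
          Finset.sum_lt_sum_of_nonempty Finset.univ_nonempty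
            (fun μ _ => Int.fract_lt_one _)
      _ = 4 := by simp
  set m : ℤ := (k : ℤ) * t - ∑ μ : Fin 4, ⌊(k : ℝ) * (a μ : ℝ) / (n : ℝ)⌋
  rw [hint] at hpos hlt ⊢
  have hm1 : 0 < m := by exact_mod_cast hpos
  have hm2 : m < 4 := by exact_mod_cast hlt
  interval_cases m <;> norm_num

theorem eigenvalue_signs_and_signature (n : ℕ) (hn : 2 ≤ n) (a : Fin 4 → ℤ)
    (hcop : ∀ μ, Int.gcd (a μ) n = 1)
    (hsum : (n : ℤ) ∣ ∑ μ : Fin 4, a μ) :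
    (∀ k ∈ Finset.Icc 1 (n - 1),
      (age n a k = 2 → 0 < bR n a k) ∧
      (age n a k = 1 ∨ age n a k = 3 → bR n a k < 0)) ∧
    ((∀ k ∈ Finset.Icc 1 (n - 1), bR n a k ≠ 0) →
      ((Finset.Icc 1 (n - 1)).filter (fun k => 0 < bR n a k)).card = hpp n a 2 ∧
      ((Finset.Icc 1 (n - 1)).filter (fun k => bR n a k < 0)).card =
        hpp n a 1 + hpp n a 3) := by
  have hprod : ∀ k ∈ Finset.Icc 1 (n - 1),
      0 < ∏ μ : Fin 4, Real.sin (Real.pi * Int.fract ((k : ℝ) * (a μ : ℝ) / (n : ℝ))) := by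
    intro k hk
    apply Finset.prod_pos
    intro μ _
    have h1 := fract_pos_aux n hn a hcop k hk μ
    have h2 := Int.fract_lt_one ((k : ℝ) * (a μ : ℝ) / (n : ℝ))
    apply Real.sin_pos_of_pos_of_lt_pi
    · positivity
    · nlinarith [Real.pi_pos]
  have hsigns : ∀ k ∈ Finset.Icc 1 (n - 1),
      (age n a k = 2 → 0 < bR n a k) ∧
      (age n a k = 1 ∨ age n a k = 3 → bR n a k < 0) := by
    intro k hk
    constructor
    · intro h2
      unfold bR
      rw [h2]
      have : Real.cos (Real.pi * 2) = 1 := by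
        rw [mul_comm]; exact Real.cos_two_pi
      rw [this]
      have := hprod k hk
      nlinarith
    · intro h13
      unfold bR
      have hcos : Real.cos (Real.pi * age n a k) = -1 := by
        rcases h13 with h | h <;> rw [h]
        · rw [mul_one]; exact Real.cos_pi
        · have : Real.pi * 3 = Real.pi + 2 * Real.pi := by ring
          rw [this, Real.cos_add, Real.cos_two_pi, Real.sin_two_pi]
          simp
      rw [hcos]
      have := hprod k hk
      nlinarith
  refine ⟨hsigns, fun hne => ?_⟩
  have hiff : ∀ k ∈ Finset.Icc 1 (n - 1),
      (0 < bR n a k ↔ age n a k = 2) ∧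
      (bR n a k < 0 ↔ (age n a k = 1 ∨ age n a k = 3)) := by
    intro k hk
    have ha := age_mem n hn a hcop hsum k hk
    have hs := hsigns k hk
    constructor
    · constructor
      · intro hpos
        rcases ha with h | h | h
        · exact absurd hpos (not_lt.mpr (le_of_lt (hs.2 (Or.inl h))))
        · exact h
        · exact absurd hpos (not_lt.mpr (le_of_lt (hs.2 (Or.inr h))))
      · exact hs.1
    · constructor
      · intro hneg
        rcases ha with h | h | h
        · exact Or.inl h
        · exact absurd hneg (not_lt.mpr (le_of_lt (hs.1 h)))
        · exact Or.inr h
      · exact hs.2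
  constructor
  · unfold hpp
    apply Finset.card_bij (fun k _ => k)
    · intro k hk
      simp only [Finset.mem_filter] at hk ⊢
      refine ⟨hk.1, ?_⟩
      have := (hiff k hk.1).1.mp hk.2
      rw [this]; norm_num
    · intro k hk k' hk' h; exact h
    · intro k hk
      simp only [Finset.mem_filter] at hk
      refine ⟨k, ?_, rfl⟩
      simp only [Finset.mem_filter]
      refine ⟨hk.1, (hiff k hk.1).1.mpr ?_⟩
      have := hk.2; push_cast at this; exact this
  · unfold hpp
    have heq : (Finset.Icc 1 (n - 1)).filter (fun k => bR n a k < 0) =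
        ((Finset.Icc 1 (n - 1)).filter (fun k => age n a k = (1 : ℕ))) ∪
        ((Finset.Icc 1 (n - 1)).filter (fun k => age n a k = (3 : ℕ))) := by
      rw [← Finset.filter_or]
      apply Finset.filter_congr
      intro k hk
      have := (hiff k hk).2
      push_cast
      simp [this]
    rw [heq, Finset.card_union_of_disjoint]
    rw [Finset.disjoint_filter]
    intro k _ h1 h3
    rw [h1] at h3
    norm_num at h3
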